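/- Let A be the unilateral right shift on ℓ²(ℕ), B = A* the left shift, and C = e₀ ⊗ e₀ the rank-one projection onto the first basis vector. Then the operator matrix M_C = [[A, C],[0, B]] on ℓ² ⊕ ℓ² is unitary; consequently 0 ∉ σ_{rgD}(M_C) while 0 ∈ σ_{rgD}(A) ∪ σ_{rgD}(B), so the inclusion σ_{rgD}(M_C) ⊆ σ_{rgD}(A) ∪ σ_{rgD}(B) can be strict. -/

import Mathlib

open Function Set

noncomputable section

namespace PseudoBF

variable {E : Type*} [NormedAddCommGroup E] [NormedSpace ℂ E]

/-- `M` is invariant under `T`. -/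
def Inv (T : E →L[ℂ] E) (M : Submodule ℂ E) : Prop := ∀ x ∈ M, T x ∈ M

/-- Restriction of `T` to a `T`-invariant submodule, as a continuous linear map. -/
def restr (T : E →L[ℂ] E) {M : Submodule ℂ E} (h : Inv T M) : M →L[ℂ] M where
  toLinearMap := (T : E →ₗ[ℂ] E).restrict h
  cont := (T.continuous.comp continuous_subtype_val).subtype_mk _

/-- Upper semi-Fredholm: finite dimensional kernel and closed range. -/
def UpperSemiFredholm (T : E →L[ℂ] E) : Prop :=
  FiniteDimensional ℂ (LinearMap.ker (T : E →ₗ[ℂ] E)) ∧ IsClosed (LinearMap.range (T : E →ₗ[ℂ] E) : Set E)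

/-- Lower semi-Fredholm: range of finite codimension. -/
def LowerSemiFredholm (T : E →L[ℂ] E) : Prop :=
  FiniteDimensional ℂ (E ⧸ LinearMap.range (T : E →ₗ[ℂ] E))

/-- Semi-Fredholm: upper or lower semi-Fredholm. -/
def SemiFredholm (T : E →L[ℂ] E) : Prop :=
  UpperSemiFredholm T ∨ LowerSemiFredholm T

/-- Quasi-nilpotent: spectral radius zero. -/
def QuasiNilpotentOp (T : E →L[ℂ] E) : Prop := spectralRadius ℂ T = 0

/-- Bounded below. -/
def BoundedBelow (T : E →L[ℂ] E) : Prop := ∃ c > 0, ∀ x, c * ‖x‖ ≤ ‖T x‖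

/-- Left invertible: bounded below with complemented closed range. -/
def LeftInvertibleOp (T : E →L[ℂ] E) : Prop :=
  BoundedBelow T ∧ IsClosed (LinearMap.range (T : E →ₗ[ℂ] E) : Set E) ∧
    ∃ P : Submodule ℂ E, IsClosed (P : Set E) ∧ IsCompl (LinearMap.range (T : E →ₗ[ℂ] E)) P

/-- Right invertible: surjective with complemented kernel. -/
def RightInvertibleOp (T : E →L[ℂ] E) : Prop :=
  Surjective T ∧ ∃ P : Submodule ℂ E, IsClosed (P : Set E) ∧ IsCompl (LinearMap.ker (T : E →ₗ[ℂ] E)) P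

/-- `T` decomposes as a direct sum, along closed invariant subspaces, of an operator
satisfying `P` and a quasi-nilpotent operator. -/
def Decomp (T : E →L[ℂ] E) (P : ∀ M : Submodule ℂ E, (M →L[ℂ] M) → Prop) : Prop :=
  ∃ (M N : Submodule ℂ E) (hM : Inv T M) (hN : Inv T N),
    IsClosed (M : Set E) ∧ IsClosed (N : Set E) ∧ IsCompl M N ∧
      P M (restr T hM) ∧ QuasiNilpotentOp (restr T hN)

def PseudoUpperSemiBFredholm (T : E →L[ℂ] E) : Prop :=
  Decomp T fun _ S => UpperSemiFredholm S

def PseudoLowerSemiBFredholm (T : E →L[ℂ] E) : Prop :=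
  Decomp T fun _ S => LowerSemiFredholm S

def PseudoSemiBFredholm (T : E →L[ℂ] E) : Prop :=
  Decomp T fun _ S => SemiFredholm S

def PseudoBFredholm (T : E →L[ℂ] E) : Prop :=
  Decomp T fun _ S => UpperSemiFredholm S ∧ LowerSemiFredholm S

def LeftGenDrazinInvertible (T : E →L[ℂ] E) : Prop :=
  Decomp T fun _ S => LeftInvertibleOp S

def RightGenDrazinInvertible (T : E →L[ℂ] E) : Prop :=
  Decomp T fun _ S => RightInvertibleOp S

def GenDrazinInvertible (T : E →L[ℂ] E) : Prop :=
  Decomp T fun _ S => IsUnit S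

def sigma_pBuF (T : E →L[ℂ] E) : Set ℂ :=
  {l | ¬ PseudoUpperSemiBFredholm (T - l • 1)}

def sigma_pBlF (T : E →L[ℂ] E) : Set ℂ :=
  {l | ¬ PseudoLowerSemiBFredholm (T - l • 1)}

def sigma_pBF (T : E →L[ℂ] E) : Set ℂ :=
  {l | ¬ PseudoBFredholm (T - l • 1)}

def sigma_lgD (T : E →L[ℂ] E) : Set ℂ :=
  {l | ¬ LeftGenDrazinInvertible (T - l • 1)}

def sigma_rgD (T : E →L[ℂ] E) : Set ℂ :=
  {l | ¬ RightGenDrazinInvertible (T - l • 1)}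

def sigma_gD (T : E →L[ℂ] E) : Set ℂ :=
  {l | ¬ GenDrazinInvertible (T - l • 1)}

/-- The approximate point spectrum. -/
def sigma_ap (T : E →L[ℂ] E) : Set ℂ := {l | ¬ BoundedBelow (T - l • 1)}

/-- The surjectivity spectrum. -/
def sigma_su (T : E →L[ℂ] E) : Set ℂ := {l | ¬ Surjective ⇑(T - l • 1)}

/-- `T` has the single valued extension property at `l0`. -/
def HasSVEPAt (T : E →L[ℂ] E) (l0 : ℂ) : Prop :=
  ∀ U : Set ℂ, IsOpen U → l0 ∈ U → ∀ f : ℂ → E, AnalyticOnNhd ℂ f U →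
    (∀ z ∈ U, T (f z) = z • f z) → ∀ z ∈ U, f z = 0

/-- The set where `T` fails to have the SVEP. -/
def S_ (T : E →L[ℂ] E) : Set ℂ := {l | ¬ HasSVEPAt T l}

/-- `l` is an accumulation point of `S`. -/
def IsAccPtOf (l : ℂ) (S : Set ℂ) : Prop :=
  ∀ ε > 0, ∃ μ ∈ S, μ ≠ l ∧ ‖μ - l‖ < ε

/-- The Banach-space adjoint of `T`, acting on the dual space. -/
def adj (T : E →L[ℂ] E) : StrongDual ℂ E →L[ℂ] StrongDual ℂ E :=
  (ContinuousLinearMap.compL ℂ E E ℂ).flip T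


abbrev H : Type := lp (fun _ : ℕ => ℂ) 2

section Helpers

lemma Hsummable (f : H) : Summable fun n => ‖f n‖ ^ 2 := by
  have h := (lp.memℓp f).summable (p := 2) (by norm_num)
  have e : ∀ n : ℕ, ‖f n‖ ^ ((2:ENNReal)).toReal = ‖f n‖ ^ 2 := by
    intro n
    rw [show ((2:ENNReal)).toReal = ((2:ℕ):ℝ) by norm_num, Real.rpow_natCast]
  simpa [e] using h

lemma Hnorm (f : H) : ‖f‖ ^ 2 = ∑' n, ‖f n‖ ^ 2 := by
  have h := lp.norm_rpow_eq_tsum (p := 2) (by norm_num) f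
  have e : ∀ x : ℝ, x ^ ((2:ENNReal)).toReal = x ^ 2 := by
    intro x
    rw [show ((2:ENNReal)).toReal = ((2:ℕ):ℝ) by norm_num, Real.rpow_natCast]
  rw [e] at h
  rw [h]
  exact tsum_congr fun n => e _

lemma Hsplit (f : H) : ‖f‖ ^ 2 = ‖f 0‖ ^ 2 + ∑' n, ‖f (n+1)‖ ^ 2 := by
  rw [Hnorm]
  exact Summable.tsum_eq_zero_add (Hsummable f)

lemma restr_pow_coe {E : Type*} [NormedAddCommGroup E] [NormedSpace ℂ E]
    (T : E →L[ℂ] E) {N : Submodule ℂ E} (h : Inv T N) (k : ℕ) (x : N) :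
    (((restr T h ^ k) x : N) : E) = (T ^ k) (x : E) := by
  induction k with
  | zero => simp
  | succ n ih =>
    rw [pow_succ', pow_succ', ContinuousLinearMap.mul_apply, ContinuousLinearMap.mul_apply]
    have : ((restr T h ((restr T h ^ n) x) : N) : E) = T (((restr T h ^ n) x : N) : E) := rfl
    rw [this, ih]

lemma not_quasinilpotent_restr {E : Type*} [NormedAddCommGroup E] [NormedSpace ℂ E]
    [CompleteSpace E] (T : E →L[ℂ] E) (hT : ∀ x, ‖T x‖ = ‖x‖) {N : Submodule ℂ E}
    (hcl : IsClosed (N : Set E)) (hN : Inv T N) (hne : N ≠ ⊥) :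
    ¬ QuasiNilpotentOp (restr T hN) := by
  intro hq
  obtain ⟨y, hyN, hy0⟩ := (Submodule.ne_bot_iff N).mp hne
  haveI : CompleteSpace N := hcl.completeSpace_coe
  set S := restr T hN with hS
  have hTk : ∀ (k : ℕ) (x : E), ‖(T ^ k) x‖ = ‖x‖ := by
    intro k
    induction k with
    | zero => simp
    | succ n ih =>
      intro x
      rw [pow_succ, ContinuousLinearMap.mul_apply, ih, hT]
  have hnorm : ∀ k : ℕ, (1:ℝ) ≤ ‖S ^ k‖ := by
    intro k
    have h1 : ‖(S ^ k) ⟨y, hyN⟩‖ = ‖y‖ := by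
      have : ‖(S ^ k) ⟨y, hyN⟩‖ = ‖(((S ^ k) ⟨y, hyN⟩ : N) : E)‖ := rfl
      rw [this, hS, restr_pow_coe, hTk]
    have h2 := (S ^ k).le_opNorm ⟨y, hyN⟩
    rw [h1] at h2
    have hnc : ‖(⟨y, hyN⟩ : N)‖ = ‖y‖ := rfl
    rw [hnc] at h2
    have hy : (0:ℝ) < ‖y‖ := norm_pos_iff.mpr hy0
    exact (le_mul_iff_one_le_left hy).mp h2
  have htend := spectrum.pow_nnnorm_pow_one_div_tendsto_nhds_spectralRadius S
  rw [hq] at htend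
  have hone : ∀ n : ℕ, (1 : ENNReal) ≤ (‖S ^ n‖₊ : ENNReal) ^ (1 / (n:ℝ)) := by
    intro n
    have h1 : (1:ENNReal) ≤ (‖S ^ n‖₊ : ENNReal) := by
      rw [← ENNReal.coe_one, ENNReal.coe_le_coe]
      have := hnorm n
      exact_mod_cast this
    calc (1:ENNReal) = 1 ^ (1/(n:ℝ)) := (ENNReal.one_rpow _).symm
      _ ≤ _ := ENNReal.rpow_le_rpow h1 (by positivity)
  have hfin := ge_of_tendsto htend (Filter.Eventually.of_forall hone)
  simp at hfin

end Helpers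

set_option synthInstance.maxHeartbeats 1000000
set_option maxHeartbeats 1000000

theorem stmt16 (A B C : H →L[ℂ] H) (M : WithLp 2 (H × H) →L[ℂ] WithLp 2 (H × H))
    (hA : ∀ (x : H) (n : ℕ), A x n = if n = 0 then 0 else x (n - 1))
    (hB : ∀ (x : H) (n : ℕ), B x n = x (n + 1))
    (hC : ∀ (x : H) (n : ℕ), C x n = if n = 0 then x 0 else 0)
    (hM : ∀ x : WithLp 2 (H × H),
      WithLp.equiv 2 (H × H) (M x) =
        (A (WithLp.equiv 2 (H × H) x).1 + C (WithLp.equiv 2 (H × H) x).2,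
          B (WithLp.equiv 2 (H × H) x).2)) :
    (∀ x, ‖M x‖ = ‖x‖) ∧ Surjective ⇑M ∧
      (0 : ℂ) ∉ sigma_rgD M ∧ (0 : ℂ) ∈ sigma_rgD A ∪ sigma_rgD B := by
  have hAiso : ∀ x : H, ‖A x‖ = ‖x‖ := by
    intro x
    have h1 : ‖A x‖ ^ 2 = ‖x‖ ^ 2 := by
      rw [Hsplit (A x), Hnorm x]
      simp [hA]
    calc ‖A x‖ = √(‖A x‖ ^ 2) := (Real.sqrt_sq (norm_nonneg _)).symm
      _ = √(‖x‖ ^ 2) := by rw [h1]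
      _ = ‖x‖ := Real.sqrt_sq (norm_nonneg _)
  have hMiso : ∀ x, ‖M x‖ = ‖x‖ := by
    intro x
    have hfst : (M x).fst = A x.fst + C x.snd := congrArg Prod.fst (hM x)
    have hsnd : (M x).snd = B x.snd := congrArg Prod.snd (hM x)
    have h1 : ‖M x‖ ^ 2 = ‖x‖ ^ 2 := by
      rw [WithLp.prod_norm_sq_eq_of_L2, WithLp.prod_norm_sq_eq_of_L2, hfst, hsnd]
      have e1 : ‖A x.fst + C x.snd‖ ^ 2 = ‖x.snd 0‖ ^ 2 + ‖x.fst‖ ^ 2 := by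
        rw [Hsplit (A x.fst + C x.snd), Hnorm x.fst]
        congr 1
        · simp [hA, hC]
        · exact tsum_congr fun n => by simp [hA, hC]
      have e2 : ‖B x.snd‖ ^ 2 = ∑' n, ‖x.snd (n+1)‖ ^ 2 := by
        rw [Hnorm]
        exact tsum_congr fun n => by rw [hB]
      rw [e1, e2, Hsplit x.snd]
      ring
    calc ‖M x‖ = √(‖M x‖ ^ 2) := (Real.sqrt_sq (norm_nonneg _)).symm
      _ = √(‖x‖ ^ 2) := by rw [h1]
      _ = ‖x‖ := Real.sqrt_sq (norm_nonneg _)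
  have hMsurj : Surjective ⇑M := by
    intro z
    refine ⟨(WithLp.equiv 2 (H × H)).symm (B z.fst, C z.fst + A z.snd), ?_⟩
    apply (WithLp.equiv 2 (H × H)).injective
    rw [hM]
    simp only [Equiv.apply_symm_apply]
    have hz : WithLp.equiv 2 (H × H) z = (z.fst, z.snd) := rfl
    rw [hz]
    refine Prod.ext ?_ ?_
    · apply lp.ext; funext n
      cases n with
      | zero => simp [hA, hB, hC]
      | succ m => simp [hA, hB, hC]
    · apply lp.ext; funext n
      simp [hA, hB, hC]
  have hMinj : Injective ⇑M := by
    intro a b hab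
    have h0 : ‖a - b‖ = 0 := by
      rw [← hMiso, map_sub, hab, sub_self, norm_zero]
    rw [norm_eq_zero, sub_eq_zero] at h0
    exact h0
  have hM0 : M - (0:ℂ) • 1 = M := by
    have hz : ((0:ℂ) • (1 : WithLp 2 (H × H) →L[ℂ] WithLp 2 (H × H))) = 0 := by
      ext x
      simp
    rw [hz, sub_zero]
  have hInvTop : Inv M (⊤ : Submodule ℂ (WithLp 2 (H × H))) := fun x _ => Submodule.mem_top
  have hInvBot : Inv M (⊥ : Submodule ℂ (WithLp 2 (H × H))) := by
    intro x hx
    rw [Submodule.mem_bot] at hx ⊢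
    rw [hx, map_zero]
  have hrgdM : RightGenDrazinInvertible (M - (0:ℂ) • 1) := by
    rw [hM0]
    refine ⟨⊤, ⊥, hInvTop, hInvBot, ?_, ?_, isCompl_top_bot, ?_, ?_⟩
    · rw [Submodule.top_coe]; exact isClosed_univ
    · rw [Submodule.bot_coe]; exact isClosed_singleton
    · constructor
      · intro y
        obtain ⟨x, hx⟩ := hMsurj (y : WithLp 2 (H × H))
        exact ⟨⟨x, Submodule.mem_top⟩, Subtype.ext hx⟩
      · refine ⟨⊤, by rw [Submodule.top_coe]; exact isClosed_univ, ?_⟩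
        have hker : LinearMap.ker ((restr M hInvTop : (⊤ : Submodule ℂ (WithLp 2 (H × H))) →L[ℂ] (⊤ : Submodule ℂ (WithLp 2 (H × H)))) : (⊤ : Submodule ℂ (WithLp 2 (H × H))) →ₗ[ℂ] (⊤ : Submodule ℂ (WithLp 2 (H × H)))) = ⊥ :=
          LinearMap.ker_eq_bot.mpr fun a b hab =>
            Subtype.ext (hMinj (congrArg Subtype.val hab))
        rw [hker]
        exact isCompl_bot_top
    · have hspec : spectrum ℂ (restr M hInvBot) = ∅ :=
        eq_empty_of_forall_notMem fun k hk =>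
          spectrum.mem_iff.mp hk (isUnit_of_subsingleton _)
      unfold QuasiNilpotentOp
      rw [spectralRadius, hspec]
      simp
  have hAnrd : ¬ RightGenDrazinInvertible (A - (0:ℂ) • 1) := by
    have hz : ((0:ℂ) • (1 : H →L[ℂ] H)) = 0 := by
      ext x
      simp
    rw [show A - (0:ℂ) • 1 = A by rw [hz, sub_zero]]
    rintro ⟨M', N', hM', hN', hMc, hNc, hcompl, hr, hq⟩
    have hNbot : N' = ⊥ := by
      by_contra hne
      exact not_quasinilpotent_restr A hAiso hNc hN' hne hq
    have hMtop : M' = ⊤ := by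
      have h := hcompl.sup_eq_top
      rw [hNbot, sup_bot_eq] at h
      exact h
    have hsurj : Surjective ⇑A := by
      intro u
      obtain ⟨w, hw⟩ := hr.1 ⟨u, by rw [hMtop]; exact Submodule.mem_top⟩
      exact ⟨w, congrArg Subtype.val hw⟩
    obtain ⟨x, hx⟩ := hsurj (lp.single 2 (0:ℕ) (1:ℂ) : H)
    have h0 : A x 0 = (lp.single 2 (0:ℕ) (1:ℂ) : H) 0 := by rw [hx]
    rw [hA, lp.single_apply_self] at h0
    simp at h0
  refine ⟨hMiso, hMsurj, ?_, ?_⟩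
  · simp only [sigma_rgD, mem_setOf_eq, not_not]
    exact hrgdM
  · exact Or.inl hAnrd

end PseudoBF
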